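/- Let G = ℤ^ℓ with a total additive ordering ⪯ admitting a minimal positive element. Let T₋ : G×G → G be translation equivariant, nondecreasing in each argument with respect to ⪯, and such that T₊(x,y) = x+y−T₋(x,y) is also nondecreasing in each argument. Let α, β, γ, δ > 0 with max{α,β} ≤ min{γ,δ}. Let μ and ν be finitely supported probability measures on G and let π be the monotone coupling of μ and ν with respect to ⪯. Then, with κ₋ = π∘T₋⁻¹ and κ₊ = π∘T₊⁻¹ the push-forwards of π by T₋ and T₊, one has α·H(μ|m) + β·H(ν|m) ≥ γ·H(κ₋|m) + δ·H(κ₊|m). -/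

import Mathlib

open scoped BigOperators ENNReal NNReal

/-- A *total additive ordering* on an abelian group `G`: a linear order (given as
a relation `r`, meaning `r a b ↔ a ⪯ b`) compatible with addition. -/
def TotalAdditiveOrdering {G : Type*} [AddCommGroup G] (r : G → G → Prop) : Prop :=
  (∀ a, r a a) ∧ (∀ a b, r a b → r b a → a = b) ∧
  (∀ a b c, r a b → r b c → r a c) ∧ (∀ a b, r a b ∨ r b a) ∧
  (∀ a b c, r a b → r (a + c) (b + c))

/-- `u` is the minimal positive element of the ordering `r`, i.e. the minimum of
`{g : 0 ≺ g}`. -/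
def IsMinimalPositive {G : Type*} [AddCommGroup G] (r : G → G → Prop) (u : G) : Prop :=
  (r 0 u ∧ u ≠ 0) ∧ ∀ g, r 0 g → g ≠ 0 → r u g

/-- `T` is translation equivariant: `T (x+z) (y+z) = T x y + z`. -/
def TranslationEquivariant {G : Type*} [AddCommGroup G] (T : G → G → G) : Prop :=
  ∀ x y z, T (x + z) (y + z) = T x y + z

/-- A finitely supported probability measure on `A`, viewed as its density. -/
def IsPMF {A : Type*} (μ : A → ℝ) : Prop :=
  (∀ x, 0 ≤ μ x) ∧ (Function.support μ).Finite ∧ ∑ᶠ x, μ x = 1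

/-- Relative entropy `H(μ | m)` of a finitely supported probability measure with respect to
the counting measure `m`: `∑ₓ μ(x) log μ(x)` (note `Real.log 0 = 0`, so `0 · log 0 = 0`). -/
noncomputable def relEntropy {A : Type*} (μ : A → ℝ) : ℝ :=
  ∑ᶠ x, μ x * Real.log (μ x)

/-- Push-forward `π ∘ T⁻¹` of a (finitely supported) measure `π` by the map `T`. -/
noncomputable def pushforward {A B : Type*} (T : A → B) (π : A → ℝ) : B → ℝ :=
  fun z => ∑ᶠ p ∈ {p : A | T p = z}, π p

/-- Cumulative distribution function `F_μ(x) = μ {g : g ⪯ x}` of `μ` with respect to the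
ordering `r`. -/
noncomputable def cdf {A : Type*} (r : A → A → Prop) (μ : A → ℝ) (x : A) : ℝ :=
  ∑ᶠ g ∈ {g | r g x}, μ g

open Classical in
/-- Generalized inverse `F_μ⁻¹(t) = min {x : F_μ(x) ≥ t}`, the minimum taken with respect to
the ordering `r` (junk value `0` if the minimum does not exist). -/
noncomputable def genInv {A : Type*} [Zero A] (r : A → A → Prop) (μ : A → ℝ) (t : ℝ) : A :=
  if h : ∃ x, t ≤ cdf r μ x ∧ ∀ y, t ≤ cdf r μ y → r x y then h.choose else 0

/-- The monotone coupling of `μ` and `ν` with respect to the ordering `r`: the law of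
`(F_μ⁻¹(U), F_ν⁻¹(U))` where `U` is uniformly distributed on `(0,1)`. -/
noncomputable def monotoneCoupling {A : Type*} [Zero A] (r : A → A → Prop) (μ ν : A → ℝ) :
    A × A → ℝ := fun p =>
  (MeasureTheory.volume.restrict (Set.Ioo (0 : ℝ) 1)
    {t : ℝ | genInv r μ t = p.1 ∧ genInv r ν t = p.2}).toReal
/-- In a finite set, a relation that is total and transitive has a maximal element. -/
lemma exists_rel_max {A : Type*} (r : A → A → Prop)
    (htot : ∀ a b, r a b ∨ r b a) (htrans : ∀ a b c, r a b → r b c → r a c)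
    (s : Finset A) (hs : s.Nonempty) : ∃ m ∈ s, ∀ x ∈ s, r x m := by
  classical
  induction s using Finset.induction_on with
  | empty => exact absurd hs (by simp)
  | @insert a s ha ih =>
    rcases s.eq_empty_or_nonempty with h | h
    · subst h
      refine ⟨a, by simp, ?_⟩
      intro x hx
      simp only [Finset.mem_insert, Finset.notMem_empty, or_false] at hx
      subst hx
      rcases htot x x with h' | h' <;> exact h'
    · obtain ⟨m, hm, hmax⟩ := ih h
      rcases htot a m with h' | h'
      · exact ⟨m, Finset.mem_insert_of_mem hm, by
          intro x hx
          rcases Finset.mem_insert.1 hx with rfl | hx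
          · exact h'
          · exact hmax x hx⟩
      · exact ⟨a, Finset.mem_insert_self a s, by
          intro x hx
          rcases Finset.mem_insert.1 hx with rfl | hx
          · rcases htot x x with h'' | h'' <;> exact h''
          · exact htrans x m a (hmax x hx) h'⟩

/-- Per-fiber bound: key step of the core inequality. -/
lemma fiber_bound {ι A₁ A₂ B₁ B₂ : Type*} [DecidableEq ι]
    [DecidableEq A₁] [DecidableEq A₂] [DecidableEq B₁] [DecidableEq B₂]
    (K : Finset ι) (p : ι → ℝ) (hp : ∀ k ∈ K, 0 < p k)
    (a : ι → A₁) (b : ι → A₂) (c : ι → B₁) (d : ι → B₂)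
    (hcd : ∀ j ∈ K, ∀ k ∈ K, c j = c k → d j = d k → j = k)
    (hd : ∀ j ∈ K, ∀ k ∈ K, d j = d k → a j = a k ∨ b j = b k)
    (k₀ : ι) (hk₀ : k₀ ∈ K)
    (ha : ∀ j ∈ K, c j = c k₀ → a j = a k₀) :
    ∑ k ∈ K.filter (fun k => c k = c k₀),
      p k * (∑ j ∈ K.filter (fun j => d j = d k), p j)
        / ((∑ j ∈ K.filter (fun j => a j = a k), p j) *
           (∑ j ∈ K.filter (fun j => b j = b k), p j)) ≤ 1 := by
  classical
  set F := K.filter (fun k => c k = c k₀) with hF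
  set AS := K.filter (fun j => a j = a k₀) with hAS
  set WA := ∑ j ∈ AS, p j with hWA
  have hpnn : ∀ k ∈ K, 0 ≤ p k := fun k hk => (hp k hk).le
  have hWApos : 0 < WA := by
    refine Finset.sum_pos' (fun i hi => hpnn i (Finset.mem_filter.1 hi).1) ⟨k₀, ?_, hp k₀ hk₀⟩
    exact Finset.mem_filter.2 ⟨hk₀, rfl⟩
  have hFK : ∀ j ∈ F, j ∈ K := fun j hj => (Finset.mem_filter.1 hj).1
  have hFc : ∀ j ∈ F, c j = c k₀ := fun j hj => (Finset.mem_filter.1 hj).2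
  have hFa : ∀ j ∈ F, a j = a k₀ := fun j hj => ha j (hFK j hj) (hFc j hj)
  have hfilA : ∀ j ∈ F, K.filter (fun i => a i = a j) = AS := by
    intro j hj
    rw [hAS]
    apply Finset.filter_congr
    intro i _
    rw [hFa j hj]
  have hwB : ∀ j ∈ F, p j ≤ ∑ i ∈ K.filter (fun i => b i = b j), p i := by
    intro j hj
    refine Finset.single_le_sum (fun i hi => hpnn i (Finset.mem_filter.1 hi).1) ?_
    exact Finset.mem_filter.2 ⟨hFK j hj, rfl⟩
  have hwBpos : ∀ j ∈ F, 0 < ∑ i ∈ K.filter (fun i => b i = b j), p i :=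
    fun j hj => lt_of_lt_of_le (hp j (hFK j hj)) (hwB j hj)
  have hwDnn : ∀ j : ι, 0 ≤ ∑ i ∈ K.filter (fun i => d i = d j), p i := by
    intro j
    exact Finset.sum_nonneg fun i hi => hpnn i (Finset.mem_filter.1 hi).1
  set t2 : ι → Prop := fun j => ∀ i ∈ K, d i = d j → a i = a k₀ with ht2
  set Gs : ι → Finset ι := fun j => if t2 j then K.filter (fun i => d i = d j) else {j} with hGs
  have hGs_pos : ∀ j, t2 j → Gs j = K.filter (fun i => d i = d j) := by
    intro j h2; simp only [hGs]; rw [if_pos h2]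
  have hGs_neg : ∀ j, ¬ t2 j → Gs j = {j} := by
    intro j h2; simp only [hGs]; rw [if_neg h2]
  -- key pointwise bound
  have key : ∀ j ∈ F,
      p j * (∑ i ∈ K.filter (fun i => d i = d j), p i)
        / ((∑ i ∈ K.filter (fun i => a i = a j), p i) *
           (∑ i ∈ K.filter (fun i => b i = b j), p i))
      ≤ (∑ i ∈ Gs j, p i) / WA := by
    intro j hj
    rw [hfilA j hj]
    by_cases h2 : t2 j
    · rw [hGs_pos j h2]
      set WD := ∑ i ∈ K.filter (fun i => d i = d j), p i
      set WB := ∑ i ∈ K.filter (fun i => b i = b j), p i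
      have h1 : p j * WD / (WA * WB) = (p j / WB) * (WD / WA) := by
        field_simp
      rw [h1]
      have h3 : p j / WB ≤ 1 := (div_le_one (hwBpos j hj)).2 (hwB j hj)
      have h4 : 0 ≤ WD / WA := div_nonneg (hwDnn j) hWApos.le
      calc (p j / WB) * (WD / WA) ≤ 1 * (WD / WA) := mul_le_mul_of_nonneg_right h3 h4
        _ = WD / WA := one_mul _
    · rw [hGs_neg j h2, Finset.sum_singleton]
      have h2' : ∃ i ∈ K, d i = d j ∧ a i ≠ a k₀ := by
        by_contra hcon
        push_neg at hcon
        exact h2 (fun i hiK hid => hcon i hiK hid)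
      obtain ⟨i₂, hi₂K, hi₂d, hi₂a⟩ := h2'
      have hbi₂ : b i₂ = b j := by
        rcases hd i₂ hi₂K j (hFK j hj) hi₂d with h | h
        · exact absurd (h.trans (hFa j hj)) hi₂a
        · exact h
      have hsub : K.filter (fun i => d i = d j) ⊆ K.filter (fun i => b i = b j) := by
        intro i hi
        obtain ⟨hiK, hid⟩ := Finset.mem_filter.1 hi
        refine Finset.mem_filter.2 ⟨hiK, ?_⟩
        rcases hd i hiK j (hFK j hj) hid with h | h
        · rcases hd i hiK i₂ hi₂K (hid.trans hi₂d.symm) with h' | h'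
          · exact absurd (h'.symm.trans (h.trans (hFa j hj))) hi₂a
          · exact h'.trans hbi₂
        · exact h
      have hDB : (∑ i ∈ K.filter (fun i => d i = d j), p i)
          ≤ ∑ i ∈ K.filter (fun i => b i = b j), p i :=
        Finset.sum_le_sum_of_subset_of_nonneg hsub
          (fun i hi _ => hpnn i (Finset.mem_filter.1 hi).1)
      set WD := ∑ i ∈ K.filter (fun i => d i = d j), p i
      set WB := ∑ i ∈ K.filter (fun i => b i = b j), p i
      have h1 : p j * WD / (WA * WB) = (WD / WB) * (p j / WA) := by
        field_simp
      rw [h1]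
      have h3 : WD / WB ≤ 1 := (div_le_one (hwBpos j hj)).2 hDB
      have h4 : 0 ≤ p j / WA := div_nonneg (hpnn j (hFK j hj)) hWApos.le
      calc (WD / WB) * (p j / WA) ≤ 1 * (p j / WA) := mul_le_mul_of_nonneg_right h3 h4
        _ = p j / WA := one_mul _
  -- pairwise disjointness of the family Gs over F
  have hdisj : (↑F : Set ι).PairwiseDisjoint Gs := by
    intro j hj j' hj' hne
    have hjF : j ∈ F := hj
    have hj'F : j' ∈ F := hj'
    have hcc : c j = c j' := (hFc j hjF).trans (hFc j' hj'F).symm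
    simp only [Function.onFun]
    rw [Finset.disjoint_left]
    intro i hi hi'
    by_cases h2 : t2 j <;> by_cases h2' : t2 j'
    · rw [hGs_pos j h2] at hi
      rw [hGs_pos j' h2'] at hi'
      have hdd : d j = d j' :=
        ((Finset.mem_filter.1 hi).2).symm.trans (Finset.mem_filter.1 hi').2
      exact hne (hcd j (hFK j hjF) j' (hFK j' hj'F) hcc hdd)
    · rw [hGs_pos j h2] at hi
      rw [hGs_neg j' h2', Finset.mem_singleton] at hi'
      have hdd : d j' = d j := by rw [← hi']; exact (Finset.mem_filter.1 hi).2
      exact hne (hcd j (hFK j hjF) j' (hFK j' hj'F) hcc hdd.symm)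
    · rw [hGs_neg j h2, Finset.mem_singleton] at hi
      rw [hGs_pos j' h2'] at hi'
      have hdd : d j = d j' := by rw [← hi]; exact (Finset.mem_filter.1 hi').2
      exact hne (hcd j (hFK j hjF) j' (hFK j' hj'F) hcc hdd)
    · rw [hGs_neg j h2, Finset.mem_singleton] at hi
      rw [hGs_neg j' h2', Finset.mem_singleton] at hi'
      exact hne (hi.symm.trans hi')
  have hGsub : ∀ j ∈ F, Gs j ⊆ AS := by
    intro j hj i hi
    by_cases h2 : t2 j
    · rw [hGs_pos j h2] at hi
      obtain ⟨hiK, hid⟩ := Finset.mem_filter.1 hi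
      exact Finset.mem_filter.2 ⟨hiK, h2 i hiK hid⟩
    · rw [hGs_neg j h2, Finset.mem_singleton] at hi
      rw [hi]
      exact Finset.mem_filter.2 ⟨hFK j hj, hFa j hj⟩
  have hbound : (∑ i ∈ F.biUnion Gs, p i) ≤ WA := by
    refine Finset.sum_le_sum_of_subset_of_nonneg ?_ (fun i hi _ => hpnn i (Finset.mem_filter.1 hi).1)
    intro i hi
    obtain ⟨j, hjF, hij⟩ := Finset.mem_biUnion.1 hi
    exact hGsub j hjF hij
  calc ∑ k ∈ F, p k * (∑ j ∈ K.filter (fun j => d j = d k), p j)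
        / ((∑ j ∈ K.filter (fun j => a j = a k), p j) *
           (∑ j ∈ K.filter (fun j => b j = b k), p j))
      ≤ ∑ k ∈ F, (∑ i ∈ Gs k, p i) / WA := Finset.sum_le_sum key
    _ = (∑ k ∈ F, ∑ i ∈ Gs k, p i) / WA := by rw [Finset.sum_div]
    _ = (∑ i ∈ F.biUnion Gs, p i) / WA := by rw [Finset.sum_biUnion hdisj]
    _ ≤ WA / WA := by gcongr
    _ = 1 := div_self hWApos.ne'

/-- The core combinatorial inequality. -/
lemma core_ineq {ι A₁ A₂ B₁ B₂ : Type*} [DecidableEq ι]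
    [DecidableEq A₁] [DecidableEq A₂] [DecidableEq B₁] [DecidableEq B₂]
    (K : Finset ι) (p : ι → ℝ) (hp : ∀ k ∈ K, 0 < p k)
    (a : ι → A₁) (b : ι → A₂) (c : ι → B₁) (d : ι → B₂)
    (hcd : ∀ j ∈ K, ∀ k ∈ K, c j = c k → d j = d k → j = k)
    (hc : ∀ j ∈ K, ∀ k ∈ K, c j = c k → a j = a k ∨ b j = b k)
    (hd : ∀ j ∈ K, ∀ k ∈ K, d j = d k → a j = a k ∨ b j = b k) :
    ∑ k ∈ K, p k * ((∑ j ∈ K.filter (fun j => c j = c k), p j) *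
        (∑ j ∈ K.filter (fun j => d j = d k), p j))
        / ((∑ j ∈ K.filter (fun j => a j = a k), p j) *
           (∑ j ∈ K.filter (fun j => b j = b k), p j)) ≤ ∑ k ∈ K, p k := by
  classical
  have hpnn : ∀ k ∈ K, 0 ≤ p k := fun k hk => (hp k hk).le
  have hmaps : ∀ k ∈ K, c k ∈ K.image c := fun k hk => Finset.mem_image_of_mem c hk
  rw [← Finset.sum_fiberwise_of_maps_to hmaps
    (fun k => p k * ((∑ j ∈ K.filter (fun j => c j = c k), p j) *
        (∑ j ∈ K.filter (fun j => d j = d k), p j))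
        / ((∑ j ∈ K.filter (fun j => a j = a k), p j) *
           (∑ j ∈ K.filter (fun j => b j = b k), p j))),
    ← Finset.sum_fiberwise_of_maps_to hmaps p]
  apply Finset.sum_le_sum
  intro z hz
  obtain ⟨k₀, hk₀, hck₀⟩ := Finset.mem_image.1 hz
  have hfil : K.filter (fun k => c k = z) = K.filter (fun k => c k = c k₀) := by
    rw [hck₀]
  rw [hfil]
  set F := K.filter (fun k => c k = c k₀) with hFdef
  have hFK : ∀ j ∈ F, j ∈ K := fun j hj => (Finset.mem_filter.1 hj).1
  have hFc : ∀ j ∈ F, c j = c k₀ := fun j hj => (Finset.mem_filter.1 hj).2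
  -- each k ∈ F has c-fiber equal to F
  have hfilC : ∀ k ∈ F, K.filter (fun j => c j = c k) = F := by
    intro k hk
    rw [hFdef]
    apply Finset.filter_congr
    intro i _
    rw [hFc k hk]
  set WC := ∑ j ∈ F, p j with hWC
  have hWCnn : 0 ≤ WC := Finset.sum_nonneg fun j hj => hpnn j (hFK j hj)
  have step1 : ∑ k ∈ F, p k * ((∑ j ∈ K.filter (fun j => c j = c k), p j) *
        (∑ j ∈ K.filter (fun j => d j = d k), p j))
        / ((∑ j ∈ K.filter (fun j => a j = a k), p j) *
           (∑ j ∈ K.filter (fun j => b j = b k), p j))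
      = WC * ∑ k ∈ F, p k * (∑ j ∈ K.filter (fun j => d j = d k), p j)
        / ((∑ j ∈ K.filter (fun j => a j = a k), p j) *
           (∑ j ∈ K.filter (fun j => b j = b k), p j)) := by
    rw [Finset.mul_sum]
    apply Finset.sum_congr rfl
    intro k hk
    rw [hfilC k hk, ← hWC]
    ring
  rw [step1]
  -- bound the inner sum by 1, splitting into the two symmetric cases
  have hSle : ∑ k ∈ F, p k * (∑ j ∈ K.filter (fun j => d j = d k), p j)
        / ((∑ j ∈ K.filter (fun j => a j = a k), p j) *
           (∑ j ∈ K.filter (fun j => b j = b k), p j)) ≤ 1 := by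
    by_cases hall : ∀ j ∈ K, c j = c k₀ → a j = a k₀
    · exact fiber_bound K p hp a b c d hcd hd k₀ hk₀ hall
    · push_neg at hall
      obtain ⟨j₂, hj₂K, hj₂c, hj₂a⟩ := hall
      have hb : ∀ j ∈ K, c j = c k₀ → b j = b k₀ := by
        intro j hjK hjc
        rcases hc j hjK k₀ hk₀ hjc with h | h
        · rcases hc j hjK j₂ hj₂K (hjc.trans hj₂c.symm) with h' | h'
          · exact absurd (h'.symm.trans h) hj₂a
          · rcases hc j₂ hj₂K k₀ hk₀ hj₂c with h'' | h''
            · exact absurd h'' hj₂a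
            · exact h'.trans h''
        · exact h
      have hd' : ∀ j ∈ K, ∀ k ∈ K, d j = d k → b j = b k ∨ a j = a k :=
        fun j hj k hk hjk => (hd j hj k hk hjk).symm
      have := fiber_bound K p hp b a c d hcd hd' k₀ hk₀ hb
      calc ∑ k ∈ F, p k * (∑ j ∈ K.filter (fun j => d j = d k), p j)
            / ((∑ j ∈ K.filter (fun j => a j = a k), p j) *
               (∑ j ∈ K.filter (fun j => b j = b k), p j))
          = ∑ k ∈ F, p k * (∑ j ∈ K.filter (fun j => d j = d k), p j)
            / ((∑ j ∈ K.filter (fun j => b j = b k), p j) *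
               (∑ j ∈ K.filter (fun j => a j = a k), p j)) := by
            apply Finset.sum_congr rfl
            intro k _
            rw [mul_comm (∑ j ∈ K.filter (fun j => a j = a k), p j)]
        _ ≤ 1 := this
  calc WC * (∑ k ∈ F, p k * (∑ j ∈ K.filter (fun j => d j = d k), p j)
        / ((∑ j ∈ K.filter (fun j => a j = a k), p j) *
           (∑ j ∈ K.filter (fun j => b j = b k), p j)))
      ≤ WC * 1 := mul_le_mul_of_nonneg_left hSle hWCnn
    _ = ∑ k ∈ F, p k := by rw [mul_one, hWC]

section OrderLayer

variable {G : Type*} [AddCommGroup G] {r : G → G → Prop}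
set_option linter.unusedSectionVars false

lemma tao_succ (hr : TotalAdditiveOrdering r) {u : G} (hu : IsMinimalPositive r u)
    {a b : G} (hab : r a b) (hne : a ≠ b) : r (a + u) b := by
  obtain ⟨hrefl, hanti, htrans, htot, hadd⟩ := hr
  have h1 : r 0 (b - a) := by
    have := hadd a b (-a)
    simpa [add_neg_cancel, sub_eq_add_neg] using this hab
  have h2 : b - a ≠ 0 := sub_ne_zero.2 (Ne.symm hne)
  have h3 : r u (b - a) := hu.2 _ h1 h2
  have h4 := hadd u (b - a) a h3
  simpa [sub_eq_add_neg, add_assoc, add_comm, add_left_comm] using h4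

open Classical in
lemma cdf_eq_sum (μ : G → ℝ) {s : Finset G} (hsupp : Function.support μ ⊆ ↑s) (x : G) :
    cdf r μ x = ∑ g ∈ s.filter (fun g => r g x), μ g := by
  rw [cdf]
  apply finsum_cond_eq_sum_of_cond_iff
  intro g hg
  simp only [Set.mem_setOf_eq, Finset.mem_filter]
  exact ⟨fun h => ⟨hsupp hg, h⟩, fun h => h.2⟩

open Classical in
lemma cdf_sub_eq_sum (μ : G → ℝ) (hr : TotalAdditiveOrdering r)
    {s : Finset G} (hsupp : Function.support μ ⊆ ↑s) (x : G) :
    cdf r μ x - μ x = ∑ g ∈ s.filter (fun g => r g x ∧ g ≠ x), μ g := by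
  rw [cdf_eq_sum μ hsupp x]
  by_cases hx : x ∈ s
  · have hxf : x ∈ s.filter (fun g => r g x) := Finset.mem_filter.2 ⟨hx, hr.1 x⟩
    have herase : (s.filter (fun g => r g x)).erase x
        = s.filter (fun g => r g x ∧ g ≠ x) := by
      ext g
      simp only [Finset.mem_erase, Finset.mem_filter]
      tauto
    rw [← Finset.add_sum_erase _ μ hxf, herase]
    ring
  · have hμx : μ x = 0 := by
      by_contra h
      exact hx (hsupp h)
    have hfil : s.filter (fun g => r g x ∧ g ≠ x) = s.filter (fun g => r g x) := by
      apply Finset.filter_congr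
      intro g hg
      have : g ≠ x := fun h => hx (h ▸ hg)
      simp [this]
    rw [hfil, hμx, sub_zero]

end OrderLayer

section GenInvLayer

variable {G : Type*} [AddCommGroup G] [Zero G] {r : G → G → Prop}
set_option linter.unusedSectionVars false

open Classical in
/-- Existence and characterization of the minimum in `genInv`, for `t ∈ (0,1]`. -/
lemma genInv_spec (hr : TotalAdditiveOrdering r) {μ : G → ℝ}
    (h0 : ∀ x, 0 ≤ μ x) (hfin : (Function.support μ).Finite) (hsum : ∑ᶠ x, μ x = 1)
    {t : ℝ} (ht0 : 0 < t) (ht1 : t ≤ 1) :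
    μ (genInv r μ t) ≠ 0 ∧ t ≤ cdf r μ (genInv r μ t) ∧
      ∀ z, t ≤ cdf r μ z → r (genInv r μ t) z := by
  obtain ⟨hrefl, hanti, htrans, htot, hadd⟩ := hr
  classical
  set s := hfin.toFinset with hs
  have hsupp : Function.support μ ⊆ ↑s := by
    intro x hx
    simpa [hs] using hx
  have hsum' : ∑ g ∈ s, μ g = 1 := by
    rw [← hsum]
    exact (finsum_eq_sum_of_support_subset μ hsupp).symm
  have hsne : s.Nonempty := by
    rcases s.eq_empty_or_nonempty with h | h
    · rw [h] at hsum'; simp at hsum'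
    · exact h
  obtain ⟨m, hm, hmax⟩ := exists_rel_max r htot htrans s hsne
  have hcdfm : cdf r μ m = 1 := by
    rw [cdf_eq_sum μ hsupp m]
    rw [Finset.filter_true_of_mem (fun g hg => hmax g hg)]
    exact hsum'
  -- the set of support points with large cdf
  set S' := s.filter (fun v => t ≤ cdf r μ v) with hS'
  have hS'ne : S'.Nonempty := ⟨m, Finset.mem_filter.2 ⟨hm, by rw [hcdfm]; exact ht1⟩⟩
  obtain ⟨x₀, hx₀S', hx₀min⟩ :=
    exists_rel_max (fun a b => r b a) (fun a b => (htot b a))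
      (fun a b c hab hbc => htrans c b a hbc hab) S' hS'ne
  have hx₀s : x₀ ∈ s := (Finset.mem_filter.1 hx₀S').1
  have hx₀cdf : t ≤ cdf r μ x₀ := (Finset.mem_filter.1 hx₀S').2
  have hminglob : ∀ z, t ≤ cdf r μ z → r x₀ z := by
    intro z hz
    set Tz := s.filter (fun g => r g z) with hTz
    have hTzne : Tz.Nonempty := by
      rcases Tz.eq_empty_or_nonempty with h | h
      · exfalso
        have : cdf r μ z = 0 := by
          rw [cdf_eq_sum μ hsupp z, ← hTz, h, Finset.sum_empty]
        rw [this] at hz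
        exact absurd (lt_of_lt_of_le ht0 hz) (lt_irrefl 0)
      · exact h
    obtain ⟨mz, hmz, hmzmax⟩ := exists_rel_max r htot htrans Tz hTzne
    have hmzs : mz ∈ s := (Finset.mem_filter.1 hmz).1
    have hmzz : r mz z := (Finset.mem_filter.1 hmz).2
    have hcdfmz : cdf r μ mz = cdf r μ z := by
      rw [cdf_eq_sum μ hsupp mz, cdf_eq_sum μ hsupp z]
      apply Finset.sum_congr _ (fun _ _ => rfl)
      ext g
      simp only [Finset.mem_filter]
      constructor
      · rintro ⟨hgs, hgmz⟩
        exact ⟨hgs, htrans g mz z hgmz hmzz⟩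
      · rintro ⟨hgs, hgz⟩
        exact ⟨hgs, hmzmax g (Finset.mem_filter.2 ⟨hgs, hgz⟩)⟩
    have hmzS' : mz ∈ S' := Finset.mem_filter.2 ⟨hmzs, by rw [hcdfmz]; exact hz⟩
    exact htrans x₀ mz z (hx₀min mz hmzS') hmzz
  have hex : ∃ x, t ≤ cdf r μ x ∧ ∀ y, t ≤ cdf r μ y → r x y := ⟨x₀, hx₀cdf, hminglob⟩
  have hgi : genInv r μ t = hex.choose := by rw [genInv, dif_pos hex]
  have hcs := hex.choose_spec
  have heq : hex.choose = x₀ :=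
    hanti _ _ (hcs.2 x₀ hx₀cdf) (hminglob _ hcs.1)
  rw [hgi, heq]
  refine ⟨?_, hx₀cdf, hminglob⟩
  have : x₀ ∈ Function.support μ := by
    rw [← Set.Finite.coe_toFinset hfin]
    exact hx₀s
  exact this

end GenInvLayer

section GenInvIff

variable {G : Type*} [AddCommGroup G] [Zero G] {r : G → G → Prop}
set_option linter.unusedSectionVars false
set_option linter.unusedVariables false

open Classical in
/-- Characterization of the level sets of `genInv` for `t ∈ (0,1]`. -/
lemma genInv_eq_iff (hr : TotalAdditiveOrdering r) {μ : G → ℝ}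
    (h0 : ∀ x, 0 ≤ μ x) (hfin : (Function.support μ).Finite) (hsum : ∑ᶠ x, μ x = 1)
    {t : ℝ} (ht0 : 0 < t) (ht1 : t ≤ 1) (x : G) :
    genInv r μ t = x ↔ (cdf r μ x - μ x < t ∧ t ≤ cdf r μ x) := by
  classical
  obtain ⟨hrefl, hanti, htrans, htot, hadd⟩ := id hr
  set s := hfin.toFinset with hs
  have hsupp : Function.support μ ⊆ ↑s := by
    intro g hg; simpa [hs] using hg
  constructor
  · rintro rfl
    obtain ⟨hne, hcdf, hmin⟩ := genInv_spec hr h0 hfin hsum ht0 ht1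
    set x := genInv r μ t
    refine ⟨?_, hcdf⟩
    by_contra hle
    push_neg at hle
    -- t ≤ cdf x - μ x ; find a support point strictly below x with large cdf
    rw [cdf_sub_eq_sum μ hr hsupp x] at hle
    set W := s.filter (fun g => r g x ∧ g ≠ x) with hW
    have hWne : W.Nonempty := by
      rcases W.eq_empty_or_nonempty with h | h
      · exfalso
        rw [h, Finset.sum_empty] at hle
        exact absurd (lt_of_lt_of_le ht0 hle) (lt_irrefl 0)
      · exact h
    obtain ⟨z, hzW, hzmax⟩ := exists_rel_max r htot htrans W hWne
    obtain ⟨hzs, hzx, hznex⟩ : z ∈ s ∧ r z x ∧ z ≠ x := by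
      have := Finset.mem_filter.1 hzW
      exact ⟨this.1, this.2.1, this.2.2⟩
    have hcdfz : (∑ g ∈ W, μ g) ≤ cdf r μ z := by
      rw [cdf_eq_sum μ hsupp z]
      apply Finset.sum_le_sum_of_subset_of_nonneg
      · intro g hg
        exact Finset.mem_filter.2 ⟨(Finset.mem_filter.1 hg).1, hzmax g hg⟩
      · exact fun g _ _ => h0 g
    have : t ≤ cdf r μ z := le_trans hle hcdfz
    have hxz : r x z := hmin z this
    exact hznex (hanti z x hzx hxz)
  · rintro ⟨h1, h2⟩
    have hminx : ∀ z, t ≤ cdf r μ z → r x z := by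
      intro z hz
      by_contra hnxz
      have hzx : r z x := by
        rcases htot x z with h | h
        · exact absurd h hnxz
        · exact h
      have hznex : z ≠ x := by
        rintro rfl
        exact hnxz (hrefl z)
      have : cdf r μ z ≤ cdf r μ x - μ x := by
        rw [cdf_sub_eq_sum μ hr hsupp x,
          cdf_eq_sum μ hsupp z]
        apply Finset.sum_le_sum_of_subset_of_nonneg
        · intro g hg
          obtain ⟨hgs, hgz⟩ := Finset.mem_filter.1 hg
          refine Finset.mem_filter.2 ⟨hgs, htrans g z x hgz hzx, ?_⟩
          rintro rfl
          exact hnxz hgz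
        · exact fun g _ _ => h0 g
      exact absurd (lt_of_le_of_lt (le_trans hz this) h1) (lt_irrefl t)
    have hex : ∃ y, t ≤ cdf r μ y ∧ ∀ z, t ≤ cdf r μ z → r y z := ⟨x, h2, hminx⟩
    have hgi : genInv r μ t = hex.choose := by rw [genInv, dif_pos hex]
    have hcs := hex.choose_spec
    rw [hgi]
    exact hanti _ _ (hcs.2 x h2) (hminx _ hcs.1)

open Classical in
/-- `genInv` is nondecreasing. -/
lemma genInv_mono (hr : TotalAdditiveOrdering r) {μ : G → ℝ}
    (h0 : ∀ x, 0 ≤ μ x) (hfin : (Function.support μ).Finite) (hsum : ∑ᶠ x, μ x = 1)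
    {t t' : ℝ} (ht0 : 0 < t) (htt' : t ≤ t') (ht1 : t' ≤ 1) :
    r (genInv r μ t) (genInv r μ t') := by
  obtain ⟨_, hcdf', _⟩ := genInv_spec hr h0 hfin hsum (lt_of_lt_of_le ht0 htt') ht1
  obtain ⟨_, _, hmin⟩ := genInv_spec hr h0 hfin hsum ht0 (le_trans htt' ht1)
  exact hmin _ (le_trans htt' hcdf')

end GenInvIff

section MeasureLayer

open MeasureTheory Set

variable {G : Type*} [AddCommGroup G] [Zero G] {r : G → G → Prop}
set_option linter.unusedSectionVars false
set_option linter.unusedVariables false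

lemma cdf_le_one {μ : G → ℝ} (h0 : ∀ x, 0 ≤ μ x) (hfin : (Function.support μ).Finite)
    (hsum : ∑ᶠ x, μ x = 1) (x : G) : cdf r μ x ≤ 1 := by
  classical
  have hsupp : Function.support μ ⊆ ↑hfin.toFinset := by
    intro g hg; simpa using hg
  have h1 : ∑ g ∈ hfin.toFinset, μ g = 1 := by
    rw [← hsum]; exact (finsum_eq_sum_of_support_subset μ hsupp).symm
  rw [cdf_eq_sum μ hsupp x, ← h1]
  apply Finset.sum_le_sum_of_subset_of_nonneg (Finset.filter_subset _ _)
  exact fun g _ _ => h0 g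

lemma cdf_sub_nonneg (hr : TotalAdditiveOrdering r) {μ : G → ℝ} (h0 : ∀ x, 0 ≤ μ x)
    (hfin : (Function.support μ).Finite) (x : G) : 0 ≤ cdf r μ x - μ x := by
  classical
  have hsupp : Function.support μ ⊆ ↑hfin.toFinset := by
    intro g hg; simpa using hg
  rw [cdf_sub_eq_sum μ hr hsupp x]
  exact Finset.sum_nonneg fun g _ => h0 g

/-- The level sets of `genInv` inside `(0,1)` are explicit intervals. -/
lemma genInv_level (hr : TotalAdditiveOrdering r) {μ : G → ℝ}
    (h0 : ∀ x, 0 ≤ μ x) (hfin : (Function.support μ).Finite) (hsum : ∑ᶠ x, μ x = 1)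
    (x : G) :
    {t : ℝ | genInv r μ t = x} ∩ Ioo 0 1
      = Ioc (cdf r μ x - μ x) (cdf r μ x) ∩ Ioo 0 1 := by
  ext t
  simp only [mem_inter_iff, mem_setOf_eq, mem_Ioo, mem_Ioc]
  constructor
  · rintro ⟨h, ht0, ht1⟩
    have := (genInv_eq_iff hr h0 hfin hsum ht0 ht1.le x).1 h
    exact ⟨⟨this.1, this.2⟩, ht0, ht1⟩
  · rintro ⟨⟨h1, h2⟩, ht0, ht1⟩
    exact ⟨(genInv_eq_iff hr h0 hfin hsum ht0 ht1.le x).2 ⟨h1, h2⟩, ht0, ht1⟩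

lemma vol_Ioc_inter {a b : ℝ} (ha : 0 ≤ a) (hb : b ≤ 1) (hab : a ≤ b) :
    volume (Ioc a b ∩ Ioo 0 1) = ENNReal.ofReal (b - a) := by
  apply le_antisymm
  · calc volume (Ioc a b ∩ Ioo 0 1) ≤ volume (Ioc a b) :=
          measure_mono (inter_subset_left)
      _ = ENNReal.ofReal (b - a) := Real.volume_Ioc
  · calc ENNReal.ofReal (b - a) = volume (Ioo a b) := Real.volume_Ioo.symm
      _ ≤ volume (Ioc a b ∩ Ioo 0 1) := by
          apply measure_mono
          intro t ht
          obtain ⟨h1, h2⟩ := ht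
          exact ⟨⟨h1, h2.le⟩, lt_of_le_of_lt ha h1, lt_of_lt_of_le h2 hb⟩

/-- The measure of a level set of `genInv` equals the mass. -/
lemma vol_genInv_level (hr : TotalAdditiveOrdering r) {μ : G → ℝ}
    (h0 : ∀ x, 0 ≤ μ x) (hfin : (Function.support μ).Finite) (hsum : ∑ᶠ x, μ x = 1)
    (x : G) :
    volume ({t : ℝ | genInv r μ t = x} ∩ Ioo 0 1) = ENNReal.ofReal (μ x) := by
  rw [genInv_level hr h0 hfin hsum x,
    vol_Ioc_inter (cdf_sub_nonneg hr h0 hfin x) (cdf_le_one h0 hfin hsum x)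
      (by linarith [h0 x])]
  congr 1
  ring

end MeasureLayer

section CouplingLayer

open MeasureTheory Set

variable {G : Type*} [AddCommGroup G] [Zero G] {r : G → G → Prop}
set_option linter.unusedSectionVars false
set_option linter.unusedVariables false

lemma coupling_apply (μ ν : G → ℝ) (x y : G) :
    monotoneCoupling r μ ν (x, y)
      = (volume (({t : ℝ | genInv r μ t = x} ∩ Ioo 0 1)
          ∩ ({t : ℝ | genInv r ν t = y} ∩ Ioo 0 1))).toReal := by
  have hset : {t : ℝ | genInv r μ t = x ∧ genInv r ν t = y} ∩ Ioo 0 1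
      = (({t : ℝ | genInv r μ t = x} ∩ Ioo 0 1)
          ∩ ({t : ℝ | genInv r ν t = y} ∩ Ioo 0 1)) := by
    ext t
    simp only [mem_inter_iff, mem_setOf_eq]
    tauto
  rw [monotoneCoupling, Measure.restrict_apply' measurableSet_Ioo, hset]

lemma coupling_nonneg (μ ν : G → ℝ) (v : G × G) : 0 ≤ monotoneCoupling r μ ν v :=
  ENNReal.toReal_nonneg

lemma coupling_level_measurable (hr : TotalAdditiveOrdering r) {μ : G → ℝ}
    (h0 : ∀ x, 0 ≤ μ x) (hfin : (Function.support μ).Finite) (hsum : ∑ᶠ x, μ x = 1)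
    (x : G) : MeasurableSet ({t : ℝ | genInv r μ t = x} ∩ Ioo 0 1) := by
  rw [genInv_level hr h0 hfin hsum x]
  exact measurableSet_Ioc.inter measurableSet_Ioo

lemma coupling_level_vol_ne_top {S : Set ℝ} (hS : S ⊆ Ioo 0 1) : volume S ≠ ⊤ := by
  apply ne_of_lt
  calc volume S ≤ volume (Ioo (0:ℝ) 1) := measure_mono hS
    _ = ENNReal.ofReal 1 := by rw [Real.volume_Ioo]; norm_num
    _ < ⊤ := ENNReal.ofReal_lt_top

lemma coupling_support {μ ν : G → ℝ} {x y : G}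
    (h : monotoneCoupling r μ ν (x, y) ≠ 0) :
    ∃ t : ℝ, (0 < t ∧ t < 1) ∧ genInv r μ t = x ∧ genInv r ν t = y := by
  by_contra hcon
  push_neg at hcon
  apply h
  rw [coupling_apply]
  have hempty : (({t : ℝ | genInv r μ t = x} ∩ Ioo 0 1)
      ∩ ({t : ℝ | genInv r ν t = y} ∩ Ioo 0 1)) = (∅ : Set ℝ) := by
    ext t
    simp only [mem_inter_iff, mem_setOf_eq, mem_Ioo, mem_empty_iff_false, iff_false]
    rintro ⟨⟨h1, ht0, ht1⟩, h2, _⟩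
    exact absurd h2 (hcon t ⟨ht0, ht1⟩ h1)
  rw [hempty, measure_empty, ENNReal.toReal_zero]

/-- First marginal of the monotone coupling. -/
lemma coupling_marginal_fst (hr : TotalAdditiveOrdering r) {μ ν : G → ℝ}
    (hμ0 : ∀ x, 0 ≤ μ x) (hμfin : (Function.support μ).Finite) (hμsum : ∑ᶠ x, μ x = 1)
    (hν0 : ∀ x, 0 ≤ ν x) (hνfin : (Function.support ν).Finite) (hνsum : ∑ᶠ x, ν x = 1)
    (x : G) :
    ∑ y ∈ hνfin.toFinset, monotoneCoupling r μ ν (x, y) = μ x := by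
  classical
  set Sν := hνfin.toFinset with hSν
  set U : G → Set ℝ := fun y =>
    ({t : ℝ | genInv r μ t = x} ∩ Ioo 0 1) ∩ ({t : ℝ | genInv r ν t = y} ∩ Ioo 0 1)
    with hU
  have hmeas : ∀ y ∈ Sν, MeasurableSet (U y) := by
    intro y _
    exact (coupling_level_measurable hr hμ0 hμfin hμsum x).inter
      (coupling_level_measurable hr hν0 hνfin hνsum y)
  have hdisj : PairwiseDisjoint (↑Sν : Set G) U := by
    intro y hy y' hy' hne
    simp only [Function.onFun]
    rw [Set.disjoint_left]
    rintro t ⟨_, ht2, _⟩ ⟨_, ht2', _⟩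
    exact hne ((ht2.symm).trans ht2')
  have hunion : (⋃ y ∈ Sν, U y) = {t : ℝ | genInv r μ t = x} ∩ Ioo 0 1 := by
    ext t
    simp only [mem_iUnion, mem_inter_iff, mem_setOf_eq, exists_prop]
    constructor
    · rintro ⟨y, _, ⟨h1, h2⟩, _⟩
      exact ⟨h1, h2⟩
    · rintro ⟨h1, ht⟩
      refine ⟨genInv r ν t, ?_, ⟨h1, ht⟩, rfl, ht⟩
      have := (genInv_spec hr hν0 hνfin hνsum ht.1 ht.2.le).1
      rw [hSν, Set.Finite.mem_toFinset]
      exact this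
  have hsum' : ∑ y ∈ Sν, volume (U y) = ENNReal.ofReal (μ x) := by
    rw [← measure_biUnion_finset hdisj hmeas, hunion,
      vol_genInv_level hr hμ0 hμfin hμsum x]
  have htop : ∀ y ∈ Sν, volume (U y) ≠ ⊤ := by
    intro y _
    apply coupling_level_vol_ne_top
    intro t ht
    exact ht.1.2
  calc ∑ y ∈ Sν, monotoneCoupling r μ ν (x, y)
      = ∑ y ∈ Sν, (volume (U y)).toReal := by
        apply Finset.sum_congr rfl
        intro y _
        rw [coupling_apply]
    _ = (∑ y ∈ Sν, volume (U y)).toReal := (ENNReal.toReal_sum htop).symm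
    _ = μ x := by rw [hsum', ENNReal.toReal_ofReal (hμ0 x)]

/-- Second marginal of the monotone coupling. -/
lemma coupling_marginal_snd (hr : TotalAdditiveOrdering r) {μ ν : G → ℝ}
    (hμ0 : ∀ x, 0 ≤ μ x) (hμfin : (Function.support μ).Finite) (hμsum : ∑ᶠ x, μ x = 1)
    (hν0 : ∀ x, 0 ≤ ν x) (hνfin : (Function.support ν).Finite) (hνsum : ∑ᶠ x, ν x = 1)
    (y : G) :
    ∑ x ∈ hμfin.toFinset, monotoneCoupling r μ ν (x, y) = ν y := by
  classical
  set Sμ := hμfin.toFinset with hSμ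
  set U : G → Set ℝ := fun x =>
    ({t : ℝ | genInv r μ t = x} ∩ Ioo 0 1) ∩ ({t : ℝ | genInv r ν t = y} ∩ Ioo 0 1)
    with hU
  have hmeas : ∀ x ∈ Sμ, MeasurableSet (U x) := by
    intro x _
    exact (coupling_level_measurable hr hμ0 hμfin hμsum x).inter
      (coupling_level_measurable hr hν0 hνfin hνsum y)
  have hdisj : PairwiseDisjoint (↑Sμ : Set G) U := by
    intro x hx x' hx' hne
    simp only [Function.onFun]
    rw [Set.disjoint_left]
    rintro t ⟨⟨ht2, _⟩, _⟩ ⟨⟨ht2', _⟩, _⟩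
    exact hne ((ht2.symm).trans ht2')
  have hunion : (⋃ x ∈ Sμ, U x) = {t : ℝ | genInv r ν t = y} ∩ Ioo 0 1 := by
    ext t
    simp only [mem_iUnion, mem_inter_iff, mem_setOf_eq, exists_prop]
    constructor
    · rintro ⟨x, _, _, h2, ht⟩
      exact ⟨h2, ht⟩
    · rintro ⟨h2, ht⟩
      refine ⟨genInv r μ t, ?_, ⟨rfl, ht⟩, h2, ht⟩
      have := (genInv_spec hr hμ0 hμfin hμsum ht.1 ht.2.le).1
      rw [hSμ, Set.Finite.mem_toFinset]
      exact this
  have hsum' : ∑ x ∈ Sμ, volume (U x) = ENNReal.ofReal (ν y) := by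
    rw [← measure_biUnion_finset hdisj hmeas, hunion,
      vol_genInv_level hr hν0 hνfin hνsum y]
  have htop : ∀ x ∈ Sμ, volume (U x) ≠ ⊤ := by
    intro x _
    apply coupling_level_vol_ne_top
    intro t ht
    exact ht.1.2
  calc ∑ x ∈ Sμ, monotoneCoupling r μ ν (x, y)
      = ∑ x ∈ Sμ, (volume (U x)).toReal := by
        apply Finset.sum_congr rfl
        intro x _
        rw [coupling_apply]
    _ = (∑ x ∈ Sμ, volume (U x)).toReal := (ENNReal.toReal_sum htop).symm
    _ = ν y := by rw [hsum', ENNReal.toReal_ofReal (hν0 y)]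

end CouplingLayer

section MoreOrder

variable {G : Type*} [AddCommGroup G] {r : G → G → Prop}
set_option linter.unusedSectionVars false

lemma tao_add_cancel (hr : TotalAdditiveOrdering r) {a b c : G}
    (h : r (a + c) (b + c)) : r a b := by
  have := hr.2.2.2.2 _ _ (-c) h
  simpa [add_assoc] using this

end MoreOrder

/-- **Proposition (entropy inequality for totally ordered groups).** For the monotone
coupling `π` of `μ` and `ν` on `G = ℤ^l`, with `κ± = π ∘ T±⁻¹`,
`α H(μ|m) + β H(ν|m) ≥ γ H(κ₋|m) + δ H(κ₊|m)`. -/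
theorem entropy_inequality_ordered_group
    {l : ℕ} (r : (Fin l → ℤ) → (Fin l → ℤ) → Prop)
    (hr : TotalAdditiveOrdering r) (hmin : ∃ u, IsMinimalPositive r u)
    (Tm : (Fin l → ℤ) → (Fin l → ℤ) → (Fin l → ℤ))
    (hTE : TranslationEquivariant Tm)
    (hmono : ∀ x₁ x₂ y₁ y₂, r x₁ x₂ → r y₁ y₂ → r (Tm x₁ y₁) (Tm x₂ y₂))
    (hmono' : ∀ x₁ x₂ y₁ y₂, r x₁ x₂ → r y₁ y₂ →
      r (x₁ + y₁ - Tm x₁ y₁) (x₂ + y₂ - Tm x₂ y₂))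
    (α β γ δ : ℝ) (hα : 0 < α) (hβ : 0 < β) (hγ : 0 < γ) (hδ : 0 < δ)
    (hmix : max α β ≤ min γ δ)
    (μ ν : (Fin l → ℤ) → ℝ) (hμ : IsPMF μ) (hν : IsPMF ν) :
    α * relEntropy μ + β * relEntropy ν ≥
      γ * relEntropy (pushforward (fun p => Tm p.1 p.2) (monotoneCoupling r μ ν)) +
      δ * relEntropy (pushforward (fun p => p.1 + p.2 - Tm p.1 p.2)
        (monotoneCoupling r μ ν)) := by
  classical
  let Γ := Fin l → ℤ
  obtain ⟨u, hu⟩ := hmin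
  obtain ⟨hμ0, hμfin, hμsum⟩ := hμ
  obtain ⟨hν0, hνfin, hνsum⟩ := hν
  set π : Γ × Γ → ℝ := monotoneCoupling r μ ν with hπdef
  set Tmf : Γ × Γ → Γ := fun p => Tm p.1 p.2 with hTmf
  set Tpf : Γ × Γ → Γ := fun p => p.1 + p.2 - Tm p.1 p.2 with hTpf
  set κm := pushforward Tmf π with hκmdef
  set κp := pushforward Tpf π with hκpdef
  set Sμ : Finset Γ := hμfin.toFinset with hSμ
  set Sν : Finset Γ := hνfin.toFinset with hSν
  set P : Finset (Γ × Γ) := Sμ ×ˢ Sν with hP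
  set K : Finset (Γ × Γ) := P.filter (fun v => π v ≠ 0) with hK
  have hsuppμ : Function.support μ ⊆ ↑Sμ := by intro x hx; simpa [hSμ] using hx
  have hsuppν : Function.support ν ⊆ ↑Sν := by intro x hx; simpa [hSν] using hx
  -- basic facts on π
  have hπ0 : ∀ v, 0 ≤ π v := fun v => coupling_nonneg μ ν v
  have hsupp_t : ∀ v : Γ × Γ, π v ≠ 0 → ∃ t : ℝ, (0 < t ∧ t < 1) ∧
      genInv r μ t = v.1 ∧ genInv r ν t = v.2 := by
    intro v hv
    exact coupling_support (x := v.1) (y := v.2) (by simpa using hv)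
  have hsuppπ : ∀ v : Γ × Γ, π v ≠ 0 → v ∈ P := by
    intro v hv
    obtain ⟨t, ⟨ht0, ht1⟩, h1, h2⟩ := hsupp_t v hv
    have hm := (genInv_spec hr hμ0 hμfin hμsum ht0 ht1.le).1
    have hn := (genInv_spec hr hν0 hνfin hνsum ht0 ht1.le).1
    rw [h1] at hm
    rw [h2] at hn
    rw [hP, Finset.mem_product]
    constructor
    · rw [hSμ, Set.Finite.mem_toFinset]; exact hm
    · rw [hSν, Set.Finite.mem_toFinset]; exact hn
  have hKmem : ∀ v ∈ K, v ∈ P ∧ π v ≠ 0 := fun v hv => Finset.mem_filter.1 hv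
  have hKpos : ∀ v ∈ K, 0 < π v :=
    fun v hv => lt_of_le_of_ne (hπ0 v) (Ne.symm (hKmem v hv).2)
  -- marginals
  have hmarg1 : ∀ x : Γ, ∑ y ∈ Sν, π (x, y) = μ x := by
    intro x
    rw [hπdef]
    exact coupling_marginal_fst hr hμ0 hμfin hμsum hν0 hνfin hνsum x
  have hmarg2 : ∀ y : Γ, ∑ x ∈ Sμ, π (x, y) = ν y := by
    intro y
    rw [hπdef]
    exact coupling_marginal_snd hr hμ0 hμfin hμsum hν0 hνfin hνsum y
  have hμsum' : ∑ x ∈ Sμ, μ x = 1 := by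
    rw [← hμsum]; exact (finsum_eq_sum_of_support_subset μ hsuppμ).symm
  have hνsum' : ∑ x ∈ Sν, ν x = 1 := by
    rw [← hνsum]; exact (finsum_eq_sum_of_support_subset ν hsuppν).symm
  have htotal : ∑ v ∈ P, π v = 1 := by
    rw [hP, Finset.sum_product]
    calc ∑ x ∈ Sμ, ∑ y ∈ Sν, π (x, y) = ∑ x ∈ Sμ, μ x :=
          Finset.sum_congr rfl (fun x _ => hmarg1 x)
      _ = 1 := hμsum'
  -- comparability of support points
  have hcomp : ∀ v w : Γ × Γ, π v ≠ 0 → π w ≠ 0 →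
      (r v.1 w.1 ∧ r v.2 w.2) ∨ (r w.1 v.1 ∧ r w.2 v.2) := by
    intro v w hv hw
    obtain ⟨t, ⟨ht0, ht1⟩, h1, h2⟩ := hsupp_t v hv
    obtain ⟨t', ⟨ht0', ht1'⟩, h1', h2'⟩ := hsupp_t w hw
    rcases le_total t t' with htt | htt
    · left
      constructor
      · rw [← h1, ← h1']; exact genInv_mono hr hμ0 hμfin hμsum ht0 htt ht1'.le
      · rw [← h2, ← h2']; exact genInv_mono hr hν0 hνfin hνsum ht0 htt ht1'.le
    · right
      constructor
      · rw [← h1, ← h1']; exact genInv_mono hr hμ0 hμfin hμsum ht0' htt ht1.le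
      · rw [← h2, ← h2']; exact genInv_mono hr hν0 hνfin hνsum ht0' htt ht1.le
  have hune : u ≠ 0 := hu.1.2
  -- (ii): fibers of Tmf match on a coordinate
  have hstep2 : ∀ v w : Γ × Γ, r v.1 w.1 → r v.2 w.2 → Tmf v = Tmf w →
      v.1 = w.1 ∨ v.2 = w.2 := by
    intro v w h1 h2 heq
    by_cases e1 : v.1 = w.1
    · exact Or.inl e1
    by_cases e2 : v.2 = w.2
    · exact Or.inr e2
    exfalso
    have s1 : r (v.1 + u) w.1 := tao_succ hr hu h1 e1
    have s2 : r (v.2 + u) w.2 := tao_succ hr hu h2 e2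
    have hmm := hmono _ _ _ _ s1 s2
    rw [hTE v.1 v.2 u] at hmm
    rw [hTmf] at heq
    simp only at heq
    rw [← heq] at hmm
    have hu0 : r u 0 := by
      apply tao_add_cancel hr (c := Tm v.1 v.2)
      simpa [add_comm, zero_add] using hmm
    exact hune (hr.2.1 u 0 hu0 hu.1.1)
  -- (iii): same for Tpf
  have hTEp : ∀ x y : Γ, (x + u) + (y + u) - Tm (x + u) (y + u) = (x + y - Tm x y) + u := by
    intro x y
    rw [hTE x y u]
    abel
  have hstep3 : ∀ v w : Γ × Γ, r v.1 w.1 → r v.2 w.2 → Tpf v = Tpf w →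
      v.1 = w.1 ∨ v.2 = w.2 := by
    intro v w h1 h2 heq
    by_cases e1 : v.1 = w.1
    · exact Or.inl e1
    by_cases e2 : v.2 = w.2
    · exact Or.inr e2
    exfalso
    have s1 : r (v.1 + u) w.1 := tao_succ hr hu h1 e1
    have s2 : r (v.2 + u) w.2 := tao_succ hr hu h2 e2
    have hmm := hmono' _ _ _ _ s1 s2
    rw [hTEp v.1 v.2] at hmm
    rw [hTpf] at heq
    simp only at heq
    rw [← heq] at hmm
    have hu0 : r u 0 := by
      apply tao_add_cancel hr (c := v.1 + v.2 - Tm v.1 v.2)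
      simpa [add_comm, zero_add] using hmm
    exact hune (hr.2.1 u 0 hu0 hu.1.1)
  -- (i): injectivity of (Tmf, Tpf) on the support
  have hstep1 : ∀ v w : Γ × Γ, r v.1 w.1 → r v.2 w.2 → Tmf v = Tmf w → Tpf v = Tpf w →
      v = w := by
    intro v w h1 h2 heqm heqp
    rw [hTmf] at heqm
    rw [hTpf] at heqp
    simp only at heqm heqp
    have hs : v.1 + v.2 = w.1 + w.2 := by
      rw [heqm] at heqp
      exact sub_left_inj.1 heqp
    have h3 : r (w.1 + v.2) (v.1 + v.2) := by
      have h4 := hr.2.2.2.2 v.2 w.2 w.1 h2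
      rw [show v.2 + w.1 = w.1 + v.2 by abel, show w.2 + w.1 = w.1 + w.2 by abel] at h4
      rw [← hs] at h4
      exact h4
    have h4 : r w.1 v.1 := tao_add_cancel hr h3
    have e1 : v.1 = w.1 := hr.2.1 _ _ h1 h4
    have e2 : v.2 = w.2 := by
      rw [e1] at hs
      exact add_left_cancel hs
    have : (v.1, v.2) = (w.1, w.2) := by rw [e1, e2]
    simpa using this
  -- combinatorial hypotheses on K
  have hKi : ∀ j ∈ K, ∀ k ∈ K, Tmf j = Tmf k → Tpf j = Tpf k → j = k := by
    intro j hj k hk hm hp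
    rcases hcomp j k (hKmem j hj).2 (hKmem k hk).2 with ⟨h1, h2⟩ | ⟨h1, h2⟩
    · exact hstep1 j k h1 h2 hm hp
    · exact (hstep1 k j h1 h2 hm.symm hp.symm).symm
  have hKc : ∀ j ∈ K, ∀ k ∈ K, Tmf j = Tmf k → j.1 = k.1 ∨ j.2 = k.2 := by
    intro j hj k hk hm
    rcases hcomp j k (hKmem j hj).2 (hKmem k hk).2 with ⟨h1, h2⟩ | ⟨h1, h2⟩
    · exact hstep2 j k h1 h2 hm
    · rcases hstep2 k j h1 h2 hm.symm with h | h
      · exact Or.inl h.symm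
      · exact Or.inr h.symm
  have hKd : ∀ j ∈ K, ∀ k ∈ K, Tpf j = Tpf k → j.1 = k.1 ∨ j.2 = k.2 := by
    intro j hj k hk hp
    rcases hcomp j k (hKmem j hj).2 (hKmem k hk).2 with ⟨h1, h2⟩ | ⟨h1, h2⟩
    · exact hstep3 j k h1 h2 hp
    · rcases hstep3 k j h1 h2 hp.symm with h | h
      · exact Or.inl h.symm
      · exact Or.inr h.symm
  -- pushforward formulas
  have hκm_eq : ∀ z : Γ, κm z = ∑ v ∈ P.filter (fun v => Tmf v = z), π v := by
    intro z
    rw [hκmdef]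
    simp only [pushforward]
    apply finsum_cond_eq_sum_of_cond_iff
    intro v hv
    simp only [Set.mem_setOf_eq, Finset.mem_filter]
    exact ⟨fun h => ⟨hsuppπ v hv, h⟩, fun h => h.2⟩
  have hκp_eq : ∀ z : Γ, κp z = ∑ v ∈ P.filter (fun v => Tpf v = z), π v := by
    intro z
    rw [hκpdef]
    simp only [pushforward]
    apply finsum_cond_eq_sum_of_cond_iff
    intro v hv
    simp only [Set.mem_setOf_eq, Finset.mem_filter]
    exact ⟨fun h => ⟨hsuppπ v hv, h⟩, fun h => h.2⟩
  -- sums over P with weight π reduce to sums over K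
  have hsumPK : ∀ (q : Γ × Γ → Prop) (_ : DecidablePred q), ∑ v ∈ P.filter (fun v => q v), π v
      = ∑ v ∈ K.filter (fun v => q v), π v := by
    intro q inst
    rw [hK, Finset.filter_comm]
    exact (Finset.sum_filter_of_ne (fun v _ h => h)).symm
  have hPK : ∀ f : Γ × Γ → ℝ, (∑ v ∈ P, π v * f v) = ∑ v ∈ K, π v * f v := by
    intro f
    rw [hK]
    exact (Finset.sum_filter_of_ne (fun v _ h => left_ne_zero_of_mul h)).symm
  -- block masses
  have hwA : ∀ v ∈ K, ∑ j ∈ K.filter (fun j => j.1 = v.1), π j = μ v.1 := by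
    intro v hv
    have hv1 : v.1 ∈ Sμ := (Finset.mem_product.1 (hKmem v hv).1).1
    have h1 : P.filter (fun j => j.1 = v.1) = {v.1} ×ˢ Sν := by
      ext w
      simp only [Finset.mem_filter, hP, Finset.mem_product, Finset.mem_singleton]
      constructor
      · rintro ⟨⟨_, h2⟩, h3⟩; exact ⟨h3, h2⟩
      · rintro ⟨h3, h2⟩
        refine ⟨⟨?_, h2⟩, h3⟩
        rw [h3]; exact hv1
    calc ∑ j ∈ K.filter (fun j => j.1 = v.1), π j
        = ∑ j ∈ P.filter (fun j => j.1 = v.1), π j := (hsumPK (fun j => j.1 = v.1) inferInstance).symm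
      _ = ∑ j ∈ {v.1} ×ˢ Sν, π j := by rw [h1]
      _ = ∑ y ∈ Sν, π (v.1, y) := by rw [Finset.sum_product, Finset.sum_singleton]
      _ = μ v.1 := hmarg1 v.1
  have hwB : ∀ v ∈ K, ∑ j ∈ K.filter (fun j => j.2 = v.2), π j = ν v.2 := by
    intro v hv
    have hv2 : v.2 ∈ Sν := (Finset.mem_product.1 (hKmem v hv).1).2
    have h1 : P.filter (fun j => j.2 = v.2) = Sμ ×ˢ {v.2} := by
      ext w
      simp only [Finset.mem_filter, hP, Finset.mem_product, Finset.mem_singleton]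
      constructor
      · rintro ⟨⟨h2, _⟩, h3⟩; exact ⟨h2, h3⟩
      · rintro ⟨h2, h3⟩
        refine ⟨⟨h2, ?_⟩, h3⟩
        rw [h3]; exact hv2
    calc ∑ j ∈ K.filter (fun j => j.2 = v.2), π j
        = ∑ j ∈ P.filter (fun j => j.2 = v.2), π j := (hsumPK (fun j => j.2 = v.2) inferInstance).symm
      _ = ∑ j ∈ Sμ ×ˢ {v.2}, π j := by rw [h1]
      _ = ∑ x ∈ Sμ, π (x, v.2) := by
          rw [Finset.sum_product]
          exact Finset.sum_congr rfl (fun x _ => Finset.sum_singleton _ _)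
      _ = ν v.2 := hmarg2 v.2
  have hwC : ∀ v : Γ × Γ, κm (Tmf v) = ∑ j ∈ K.filter (fun j => Tmf j = Tmf v), π j :=
    fun v => (hκm_eq (Tmf v)).trans (hsumPK (fun j => Tmf j = Tmf v) inferInstance)
  have hwD : ∀ v : Γ × Γ, κp (Tpf v) = ∑ j ∈ K.filter (fun j => Tpf j = Tpf v), π j :=
    fun v => (hκp_eq (Tpf v)).trans (hsumPK (fun j => Tpf j = Tpf v) inferInstance)
  -- positivity on the support
  have hμpos : ∀ v ∈ K, 0 < μ v.1 := by
    intro v hv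
    have hv1 : v.1 ∈ Sμ := (Finset.mem_product.1 (hKmem v hv).1).1
    rw [hSμ, Set.Finite.mem_toFinset] at hv1
    exact lt_of_le_of_ne (hμ0 _) (Ne.symm hv1)
  have hνpos : ∀ v ∈ K, 0 < ν v.2 := by
    intro v hv
    have hv2 : v.2 ∈ Sν := (Finset.mem_product.1 (hKmem v hv).1).2
    rw [hSν, Set.Finite.mem_toFinset] at hv2
    exact lt_of_le_of_ne (hν0 _) (Ne.symm hv2)
  have hκmpos : ∀ v ∈ K, 0 < κm (Tmf v) := by
    intro v hv
    rw [hwC v]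
    exact Finset.sum_pos' (fun j _ => hπ0 j)
      ⟨v, Finset.mem_filter.2 ⟨hv, rfl⟩, hKpos v hv⟩
  have hκppos : ∀ v ∈ K, 0 < κp (Tpf v) := by
    intro v hv
    rw [hwD v]
    exact Finset.sum_pos' (fun j _ => hπ0 j)
      ⟨v, Finset.mem_filter.2 ⟨hv, rfl⟩, hKpos v hv⟩
  -- nonnegativity and boundedness (for entropy signs)
  have hκm_nn : ∀ z, 0 ≤ κm z := by
    intro z
    rw [hκm_eq z]
    exact Finset.sum_nonneg (fun j _ => hπ0 j)
  have hκp_nn : ∀ z, 0 ≤ κp z := by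
    intro z
    rw [hκp_eq z]
    exact Finset.sum_nonneg (fun j _ => hπ0 j)
  have hκm_le1 : ∀ z, κm z ≤ 1 := by
    intro z
    rw [hκm_eq z, ← htotal]
    exact Finset.sum_le_sum_of_subset_of_nonneg (Finset.filter_subset _ _)
      (fun j _ _ => hπ0 j)
  have hκp_le1 : ∀ z, κp z ≤ 1 := by
    intro z
    rw [hκp_eq z, ← htotal]
    exact Finset.sum_le_sum_of_subset_of_nonneg (Finset.filter_subset _ _)
      (fun j _ _ => hπ0 j)
  have hμle1 : ∀ x, μ x ≤ 1 := by
    intro x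
    by_cases hx : x ∈ Sμ
    · rw [← hμsum']
      exact Finset.single_le_sum (fun i _ => hμ0 i) hx
    · have hx0 : μ x = 0 := by
        by_contra h
        exact hx (hsuppμ h)
      rw [hx0]; norm_num
  have hνle1 : ∀ x, ν x ≤ 1 := by
    intro x
    by_cases hx : x ∈ Sν
    · rw [← hνsum']
      exact Finset.single_le_sum (fun i _ => hν0 i) hx
    · have hx0 : ν x = 0 := by
        by_contra h
        exact hx (hsuppν h)
      rw [hx0]; norm_num
  -- entropy identities
  have hHμS : relEntropy μ = ∑ x ∈ Sμ, μ x * Real.log (μ x) := by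
    rw [relEntropy]
    apply finsum_eq_sum_of_support_subset
    intro x hx
    exact hsuppμ (show μ x ≠ 0 from fun h0x => hx (by simp [h0x]))
  have hHνS : relEntropy ν = ∑ x ∈ Sν, ν x * Real.log (ν x) := by
    rw [relEntropy]
    apply finsum_eq_sum_of_support_subset
    intro x hx
    exact hsuppν (show ν x ≠ 0 from fun h0x => hx (by simp [h0x]))
  have hHμ : relEntropy μ = ∑ v ∈ K, π v * Real.log (μ v.1) := by
    rw [hHμS, ← hPK (fun v => Real.log (μ v.1)), hP, Finset.sum_product]
    apply Finset.sum_congr rfl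
    intro x _
    show μ x * Real.log (μ x) = ∑ y ∈ Sν, π (x, y) * Real.log (μ x)
    rw [← Finset.sum_mul, hmarg1 x]
  have hHν : relEntropy ν = ∑ v ∈ K, π v * Real.log (ν v.2) := by
    rw [hHνS, ← hPK (fun v => Real.log (ν v.2)), hP, Finset.sum_product]
    rw [Finset.sum_comm]
    apply Finset.sum_congr rfl
    intro y _
    show ν y * Real.log (ν y) = ∑ x ∈ Sμ, π (x, y) * Real.log (ν y)
    rw [← Finset.sum_mul, hmarg2 y]
  have himgm : ∀ z : Γ, z ∉ P.image Tmf → κm z = 0 := by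
    intro z hz
    rw [hκm_eq z]
    have h1 : P.filter (fun v => Tmf v = z) = ∅ := by
      rw [Finset.filter_eq_empty_iff]
      intro v hv heq
      exact hz (Finset.mem_image.2 ⟨v, hv, heq⟩)
    rw [h1, Finset.sum_empty]
  have himgp : ∀ z : Γ, z ∉ P.image Tpf → κp z = 0 := by
    intro z hz
    rw [hκp_eq z]
    have h1 : P.filter (fun v => Tpf v = z) = ∅ := by
      rw [Finset.filter_eq_empty_iff]
      intro v hv heq
      exact hz (Finset.mem_image.2 ⟨v, hv, heq⟩)
    rw [h1, Finset.sum_empty]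
  have hHκmS : relEntropy κm = ∑ z ∈ P.image Tmf, κm z * Real.log (κm z) := by
    rw [relEntropy]
    apply finsum_eq_sum_of_support_subset
    intro z hz
    rw [Finset.mem_coe]
    by_contra hzi
    exact hz (by simp [himgm z hzi])
  have hHκpS : relEntropy κp = ∑ z ∈ P.image Tpf, κp z * Real.log (κp z) := by
    rw [relEntropy]
    apply finsum_eq_sum_of_support_subset
    intro z hz
    rw [Finset.mem_coe]
    by_contra hzi
    exact hz (by simp [himgp z hzi])
  have hHκm : relEntropy κm = ∑ v ∈ K, π v * Real.log (κm (Tmf v)) := by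
    rw [hHκmS, ← hPK (fun v => Real.log (κm (Tmf v))),
      ← Finset.sum_fiberwise_of_maps_to (fun v hv => Finset.mem_image_of_mem Tmf hv)
        (fun v => π v * Real.log (κm (Tmf v)))]
    apply Finset.sum_congr rfl
    intro z _
    calc κm z * Real.log (κm z)
        = ∑ v ∈ P.filter (fun v => Tmf v = z), π v * Real.log (κm z) := by
          rw [← Finset.sum_mul, ← hκm_eq z]
      _ = ∑ v ∈ P.filter (fun v => Tmf v = z), π v * Real.log (κm (Tmf v)) := by
          apply Finset.sum_congr rfl
          intro v hv
          rw [(Finset.mem_filter.1 hv).2]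
  have hHκp : relEntropy κp = ∑ v ∈ K, π v * Real.log (κp (Tpf v)) := by
    rw [hHκpS, ← hPK (fun v => Real.log (κp (Tpf v))),
      ← Finset.sum_fiberwise_of_maps_to (fun v hv => Finset.mem_image_of_mem Tpf hv)
        (fun v => π v * Real.log (κp (Tpf v)))]
    apply Finset.sum_congr rfl
    intro z _
    calc κp z * Real.log (κp z)
        = ∑ v ∈ P.filter (fun v => Tpf v = z), π v * Real.log (κp z) := by
          rw [← Finset.sum_mul, ← hκp_eq z]
      _ = ∑ v ∈ P.filter (fun v => Tpf v = z), π v * Real.log (κp (Tpf v)) := by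
          apply Finset.sum_congr rfl
          intro v hv
          rw [(Finset.mem_filter.1 hv).2]
  -- the core inequality, instantiated
  have hcore : ∑ k ∈ K, π k * ((∑ j ∈ K.filter (fun j => Tmf j = Tmf k), π j) *
        (∑ j ∈ K.filter (fun j => Tpf j = Tpf k), π j))
        / ((∑ j ∈ K.filter (fun j => j.1 = k.1), π j) *
           (∑ j ∈ K.filter (fun j => j.2 = k.2), π j)) ≤ ∑ k ∈ K, π k :=
    core_ineq K π hKpos (fun v => v.1) (fun v => v.2) Tmf Tpf hKi hKc hKd
  have hcore' : ∑ v ∈ K, π v * (κm (Tmf v) * κp (Tpf v) / (μ v.1 * ν v.2))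
      ≤ ∑ v ∈ K, π v := by
    refine le_trans (le_of_eq (Finset.sum_congr rfl ?_)) hcore
    intro v hv
    rw [hwC v, hwD v, ← hwA v hv, ← hwB v hv]
    ring
  -- pointwise logarithmic bound
  have hQle : ∀ v ∈ K, π v * (Real.log (κm (Tmf v)) + Real.log (κp (Tpf v)))
      - π v * (Real.log (μ v.1) + Real.log (ν v.2))
      ≤ π v * (κm (Tmf v) * κp (Tpf v) / (μ v.1 * ν v.2)) - π v := by
    intro v hv
    have hnum : 0 < κm (Tmf v) * κp (Tpf v) := mul_pos (hκmpos v hv) (hκppos v hv)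
    have hden : 0 < μ v.1 * ν v.2 := mul_pos (hμpos v hv) (hνpos v hv)
    have hQpos : 0 < κm (Tmf v) * κp (Tpf v) / (μ v.1 * ν v.2) := div_pos hnum hden
    have hlogeq : Real.log (κm (Tmf v) * κp (Tpf v) / (μ v.1 * ν v.2))
        = Real.log (κm (Tmf v)) + Real.log (κp (Tpf v))
          - (Real.log (μ v.1) + Real.log (ν v.2)) := by
      rw [Real.log_div (ne_of_gt hnum) (ne_of_gt hden),
        Real.log_mul (ne_of_gt (hκmpos v hv)) (ne_of_gt (hκppos v hv)),
        Real.log_mul (ne_of_gt (hμpos v hv)) (ne_of_gt (hνpos v hv))]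
    have hlog := Real.log_le_sub_one_of_pos hQpos
    rw [hlogeq] at hlog
    have h7 := mul_le_mul_of_nonneg_left hlog (hπ0 v)
    calc π v * (Real.log (κm (Tmf v)) + Real.log (κp (Tpf v)))
          - π v * (Real.log (μ v.1) + Real.log (ν v.2))
        = π v * (Real.log (κm (Tmf v)) + Real.log (κp (Tpf v))
            - (Real.log (μ v.1) + Real.log (ν v.2))) := by ring
      _ ≤ π v * (κm (Tmf v) * κp (Tpf v) / (μ v.1 * ν v.2) - 1) := h7
      _ = π v * (κm (Tmf v) * κp (Tpf v) / (μ v.1 * ν v.2)) - π v := by ring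
  -- the entropy comparison
  have hkey : ∑ v ∈ K, π v * (Real.log (κm (Tmf v)) + Real.log (κp (Tpf v)))
      ≤ ∑ v ∈ K, π v * (Real.log (μ v.1) + Real.log (ν v.2)) := by
    rw [← sub_nonpos, ← Finset.sum_sub_distrib]
    calc ∑ v ∈ K, (π v * (Real.log (κm (Tmf v)) + Real.log (κp (Tpf v)))
          - π v * (Real.log (μ v.1) + Real.log (ν v.2)))
        ≤ ∑ v ∈ K, (π v * (κm (Tmf v) * κp (Tpf v) / (μ v.1 * ν v.2)) - π v) :=
          Finset.sum_le_sum hQle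
      _ = (∑ v ∈ K, π v * (κm (Tmf v) * κp (Tpf v) / (μ v.1 * ν v.2)))
          - ∑ v ∈ K, π v := Finset.sum_sub_distrib _ _
      _ ≤ 0 := sub_nonpos.2 hcore'
  have hsum_entropy : relEntropy κm + relEntropy κp ≤ relEntropy μ + relEntropy ν := by
    rw [hHκm, hHκp, hHμ, hHν, ← Finset.sum_add_distrib, ← Finset.sum_add_distrib]
    calc ∑ v ∈ K, (π v * Real.log (κm (Tmf v)) + π v * Real.log (κp (Tpf v)))
        = ∑ v ∈ K, π v * (Real.log (κm (Tmf v)) + Real.log (κp (Tpf v))) :=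
          Finset.sum_congr rfl (fun v _ => by ring)
      _ ≤ ∑ v ∈ K, π v * (Real.log (μ v.1) + Real.log (ν v.2)) := hkey
      _ = ∑ v ∈ K, (π v * Real.log (μ v.1) + π v * Real.log (ν v.2)) :=
          Finset.sum_congr rfl (fun v _ => by ring)
  -- entropy signs
  have hHμ_np : relEntropy μ ≤ 0 := by
    rw [hHμS]
    apply Finset.sum_nonpos
    intro x _
    exact mul_nonpos_of_nonneg_of_nonpos (hμ0 x) (Real.log_nonpos (hμ0 x) (hμle1 x))
  have hHν_np : relEntropy ν ≤ 0 := by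
    rw [hHνS]
    apply Finset.sum_nonpos
    intro x _
    exact mul_nonpos_of_nonneg_of_nonpos (hν0 x) (Real.log_nonpos (hν0 x) (hνle1 x))
  have hHκm_np : relEntropy κm ≤ 0 := by
    rw [hHκmS]
    apply Finset.sum_nonpos
    intro z _
    exact mul_nonpos_of_nonneg_of_nonpos (hκm_nn z) (Real.log_nonpos (hκm_nn z) (hκm_le1 z))
  have hHκp_np : relEntropy κp ≤ 0 := by
    rw [hHκpS]
    apply Finset.sum_nonpos
    intro z _
    exact mul_nonpos_of_nonneg_of_nonpos (hκp_nn z) (Real.log_nonpos (hκp_nn z) (hκp_le1 z))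
  -- final arithmetic
  rw [ge_iff_le]
  set cc := max α β with hcc
  have hcα : α ≤ cc := le_max_left α β
  have hcβ : β ≤ cc := le_max_right α β
  have hcγ : cc ≤ γ := le_trans hmix (min_le_left γ δ)
  have hcδ : cc ≤ δ := le_trans hmix (min_le_right γ δ)
  have hc0 : 0 ≤ cc := le_trans hα.le hcα
  have e1 : γ * relEntropy κm ≤ cc * relEntropy κm :=
    mul_le_mul_of_nonpos_right hcγ hHκm_np
  have e2 : δ * relEntropy κp ≤ cc * relEntropy κp :=
    mul_le_mul_of_nonpos_right hcδ hHκp_np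
  have e3 : cc * (relEntropy κm + relEntropy κp)
      ≤ cc * (relEntropy μ + relEntropy ν) :=
    mul_le_mul_of_nonneg_left hsum_entropy hc0
  rw [mul_add, mul_add] at e3
  have e4 : cc * relEntropy μ ≤ α * relEntropy μ :=
    mul_le_mul_of_nonpos_right hcα hHμ_np
  have e5 : cc * relEntropy ν ≤ β * relEntropy ν :=
    mul_le_mul_of_nonpos_right hcβ hHν_np
  linarith
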